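/- Let φ : ℂ² \ {(0,0)} → ℝ be any function satisfying |z₁|² · |a|^(−2·φ(z₁,z₂)) + |z₂|² · |b|^(−2·φ(z₁,z₂)) = 1 for all (z₁, z₂) ≠ (0, 0), and define ψ̃(z₁, z₂) := ( φ(z₁,z₂) mod ℤ , z₁ · a^(−φ(z₁,z₂)) , z₂ · b^(−φ(z₁,z₂)) ) ∈ (ℝ/ℤ) × ℂ × ℂ. Then ψ̃ is surjective onto (ℝ/ℤ) × S³, where S³ = { (u₁, u₂) ∈ ℂ² : |u₁|² + |u₂|² = 1 }: for every s ∈ ℝ and every (u₁, u₂) ∈ ℂ² with |u₁|² + |u₂|² = 1, there exists a nonzero (z₁, z₂) ∈ ℂ² with ψ̃(z₁, z₂) = ( s mod ℤ , u₁ , u₂ ). -/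

import Mathlib

lemma aux_inj {A B : ℝ} (hA : 1 < A) (hB : 1 < B) {c₁ c₂ : ℝ}
    (h1 : 0 ≤ c₁) (h2 : 0 ≤ c₂) (hpos : 0 < c₁ + c₂) :
    StrictAnti (fun t : ℝ => c₁ * A ^ (-(2 * t)) + c₂ * B ^ (-(2 * t))) := by
  intro x y hxy
  have hle1 : A ^ (-(2*y)) ≤ A ^ (-(2*x)) :=
    Real.rpow_le_rpow_left_iff hA |>.mpr (by linarith)
  have hlt1 : A ^ (-(2*y)) < A ^ (-(2*x)) :=
    Real.rpow_lt_rpow_left_iff hA |>.mpr (by linarith)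
  have hle2 : B ^ (-(2*y)) ≤ B ^ (-(2*x)) :=
    Real.rpow_le_rpow_left_iff hB |>.mpr (by linarith)
  have hlt2 : B ^ (-(2*y)) < B ^ (-(2*x)) :=
    Real.rpow_lt_rpow_left_iff hB |>.mpr (by linarith)
  rcases lt_or_eq_of_le h1 with hc1 | hc1
  · exact add_lt_add_of_lt_of_le (by nlinarith) (by nlinarith)
  · have hc2 : 0 < c₂ := by linarith
    exact add_lt_add_of_le_of_lt (by nlinarith) (by nlinarith)

/-- The map `ψ̃(z₁,z₂) = (φ(z) mod ℤ, z₁ a^(-φ z), z₂ b^(-φ z))` is surjective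
onto `(ℝ/ℤ) × S³`. -/
theorem stmt9 (a b : ℂ) (ha : 1 < ‖a‖) (hb : 1 < ‖b‖)
    (φ : ℂ × ℂ → ℝ)
    (hφ : ∀ z : ℂ × ℂ, z ≠ 0 →
      ‖z.1‖ ^ 2 * ‖a‖ ^ (-(2 * φ z)) +
        ‖z.2‖ ^ 2 * ‖b‖ ^ (-(2 * φ z)) = 1)
    (s : ℝ) (u : ℂ × ℂ)
    (hu : ‖u.1‖ ^ 2 + ‖u.2‖ ^ 2 = 1) :
    ∃ z : ℂ × ℂ, z ≠ 0 ∧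
      ((φ z : AddCircle (1 : ℝ)), z.1 * a ^ (-(φ z : ℂ)), z.2 * b ^ (-(φ z : ℂ)))
        = ((s : AddCircle (1 : ℝ)), u.1, u.2) := by
  have ha0 : a ≠ 0 := by
    intro h; rw [h] at ha; simp at ha; linarith
  have hb0 : b ≠ 0 := by
    intro h; rw [h] at hb; simp at hb; linarith
  have hA0 : (0:ℝ) < ‖a‖ := lt_trans one_pos ha
  have hB0 : (0:ℝ) < ‖b‖ := lt_trans one_pos hb
  have has : a ^ (s:ℂ) ≠ 0 := by
    rw [Ne, Complex.cpow_eq_zero_iff]; tauto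
  have hbs : b ^ (s:ℂ) ≠ 0 := by
    rw [Ne, Complex.cpow_eq_zero_iff]; tauto
  set z : ℂ × ℂ := (u.1 * a ^ (s:ℂ), u.2 * b ^ (s:ℂ)) with hzdef
  have hune : u ≠ 0 := by
    intro h; rw [h] at hu; simp at hu
  have hz : z ≠ 0 := by
    intro h
    apply hune
    have h1 : u.1 * a ^ (s:ℂ) = 0 := congrArg Prod.fst h
    have h2 : u.2 * b ^ (s:ℂ) = 0 := congrArg Prod.snd h
    have : u.1 = 0 := by rcases mul_eq_zero.mp h1 with h|h; exact h; exact absurd h has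
    have : u.2 = 0 := by rcases mul_eq_zero.mp h2 with h|h; exact h; exact absurd h hbs
    exact Prod.ext ‹u.1 = 0› ‹u.2 = 0›
  -- |z.1|^2 = |u.1|^2 * |a|^(2s)
  have habs1 : ‖z.1‖ ^ 2 = ‖u.1‖ ^ 2 * ‖a‖ ^ (2*s) := by
    rw [hzdef]
    simp only [norm_mul, mul_pow, Complex.norm_cpow_real]
    rw [← Real.rpow_natCast (‖a‖ ^ s) 2, ← Real.rpow_mul hA0.le]
    ring_nf
  have habs2 : ‖z.2‖ ^ 2 = ‖u.2‖ ^ 2 * ‖b‖ ^ (2*s) := by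
    rw [hzdef]
    simp only [norm_mul, mul_pow, Complex.norm_cpow_real]
    rw [← Real.rpow_natCast (‖b‖ ^ s) 2, ← Real.rpow_mul hB0.le]
    ring_nf
  have hfs : ‖z.1‖ ^ 2 * ‖a‖ ^ (-(2 * s)) +
      ‖z.2‖ ^ 2 * ‖b‖ ^ (-(2 * s)) = 1 := by
    rw [habs1, habs2, mul_assoc, mul_assoc, ← Real.rpow_add hA0, ← Real.rpow_add hB0]
    simp [hu]
  have hft := hφ z hz
  have hc1 : (0:ℝ) ≤ ‖z.1‖ ^ 2 := sq_nonneg _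
  have hc2 : (0:ℝ) ≤ ‖z.2‖ ^ 2 := sq_nonneg _
  have hpos : 0 < ‖z.1‖ ^ 2 + ‖z.2‖ ^ 2 := by
    by_contra hcon
    push_neg at hcon
    have e1 : ‖z.1‖ = 0 := by
      nlinarith [norm_nonneg z.1, norm_nonneg z.2]
    have e2 : ‖z.2‖ = 0 := by
      nlinarith [norm_nonneg z.1, norm_nonneg z.2]
    exact hz (Prod.ext (norm_eq_zero.mp e1) (norm_eq_zero.mp e2))
  have hinj := (aux_inj ha hb hc1 hc2 hpos).injective
  have hφz : φ z = s := hinj (by simpa using hft.trans hfs.symm)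
  refine ⟨z, hz, ?_⟩
  have hcan : ∀ (c : ℂ), c ≠ 0 → c ^ (s:ℂ) * c ^ (-(s:ℂ)) = 1 := by
    intro c hc
    rw [← Complex.cpow_add _ _ hc]
    simp
  rw [hφz]
  refine Prod.ext rfl (Prod.ext ?_ ?_)
  · show u.1 * a ^ (s:ℂ) * a ^ (-(s:ℂ)) = u.1
    rw [mul_assoc, hcan a ha0, mul_one]
  · show u.2 * b ^ (s:ℂ) * b ^ (-(s:ℂ)) = u.2
    rw [mul_assoc, hcan b hb0, mul_one]
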